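/- Suppose T1 is a rooted balanced binary phylogenetic tree on a leaf-set of cardinality 2^m, and T2 is an arbitrary rooted binary phylogenetic tree on t > 0 leaves with L(T2) ⊆ L(T1). Then for every δ ∈ (0, 1/2), mast{T1, T2} ≥ (m·log(1−δ) + log t)/(1 − log δ). -/

import Mathlib

/-!
# Rooted binary phylogenetic trees

`RTree L` is the type of rooted binary trees with leaves labelled by elements of `L`:
every internal vertex has exactly two children (a left child and a right child), and
a tree with one leaf is a single vertex.
-/

inductive RTree (L : Type) : Type
  | leaf : L → RTree L
  | node : RTree L → RTree L → RTree L

namespace RTree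

variable {L : Type}

/-- The list of leaf labels of a rooted binary tree, read from left to right. -/
def leafList : RTree L → List L
  | leaf b => [b]
  | node l r => leafList l ++ leafList r

/-- The number of leaves of a rooted binary tree. -/
def numLeaves (T : RTree L) : ℕ := T.leafList.length

/-- The set of leaf labels of a rooted binary tree. -/
def leafSet (T : RTree L) : Set L := {b | b ∈ T.leafList}

/-- The height of a rooted binary tree: the maximum distance from the root to a leaf. -/
def height : RTree L → ℕ
  | leaf _ => 0
  | node l r => max (height l) (height r) + 1

/-- A rooted binary tree is balanced if all of its leaves are at the same distance
from the root. -/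
def IsBalanced : RTree L → Prop
  | leaf _ => True
  | node l r => IsBalanced l ∧ IsBalanced r ∧ height l = height r

/-- A rooted binary tree is phylogenetic if its leaves are labelled bijectively by a
finite set, i.e. all leaf labels are distinct. -/
def IsPhylo (T : RTree L) : Prop := T.leafList.Nodup

/-- `Embeds S T` is the subtree relation `S ⪯ T`: there is an injective map `f` from the
vertices of `S` to the vertices of `T` such that `f x = x` for every leaf `x` of `S`
(leaves being identified across trees by their labels) and
`f (x ∧ y) = f x ∧ f y` for all vertices `x`, `y` of `S`, where `∧` denotes the most
recent common ancestor.  Equivalently (for trees with distinct leaf labels), `S` is the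
restriction of `T` to the leaf set of `S`, up to rooted isomorphism; this structural
characterization is taken as the definition. -/
inductive Embeds : RTree L → RTree L → Prop
  | leaf (b : L) : Embeds (RTree.leaf b) (RTree.leaf b)
  | left {S l r : RTree L} : Embeds S l → Embeds S (RTree.node l r)
  | right {S l r : RTree L} : Embeds S r → Embeds S (RTree.node l r)
  | pair {s₁ s₂ l r : RTree L} :
      Embeds s₁ l → Embeds s₂ r → Embeds (RTree.node s₁ s₂) (RTree.node l r)
  | pair_swap {s₁ s₂ l r : RTree L} :
      Embeds s₁ r → Embeds s₂ l → Embeds (RTree.node s₁ s₂) (RTree.node l r)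

/-- `mast T₁ T₂` is the maximum cardinality of a subset `X ⊆ L(T₁) ∩ L(T₂)` such that
the restrictions `T₁|X` and `T₂|X` are isomorphic; equivalently, the maximum number of
leaves of a rooted binary phylogenetic tree `S` with `S ⪯ T₁` and `S ⪯ T₂`. -/
noncomputable def mast (T₁ T₂ : RTree L) : ℕ :=
  sSup {n | ∃ S : RTree L, S.IsPhylo ∧ Embeds S T₁ ∧ Embeds S T₂ ∧ S.numLeaves = n}

/- helpers -/

lemma leafList_node (l r : RTree L) : (node l r).leafList = l.leafList ++ r.leafList := rfl

lemma numLeaves_node (l r : RTree L) : (node l r).numLeaves = l.numLeaves + r.numLeaves := by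
  simp [numLeaves, leafList]

lemma embeds_leafList_subset {S T : RTree L} (h : Embeds S T) : S.leafList ⊆ T.leafList := by
  induction h with
  | leaf b => exact fun x hx => hx
  | left _ ih => intro x hx; simp only [leafList_node, List.mem_append]; exact Or.inl (ih hx)
  | right _ ih => intro x hx; simp only [leafList_node, List.mem_append]; exact Or.inr (ih hx)
  | pair _ _ ih1 ih2 =>
      intro x hx; simp only [leafList_node, List.mem_append] at hx ⊢
      exact hx.imp (fun h => ih1 h) (fun h => ih2 h)
  | pair_swap _ _ ih1 ih2 =>
      intro x hx; simp only [leafList_node, List.mem_append] at hx ⊢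
      exact (hx.imp (fun h => ih1 h) (fun h => ih2 h)).symm

lemma numLeaves_le_of_embeds {S T : RTree L} (h : Embeds S T) : S.numLeaves ≤ T.numLeaves := by
  induction h with
  | leaf b => exact le_refl _
  | left _ ih => rw [numLeaves_node]; omega
  | right _ ih => rw [numLeaves_node]; omega
  | pair _ _ ih1 ih2 => rw [numLeaves_node, numLeaves_node]; omega
  | pair_swap _ _ ih1 ih2 => rw [numLeaves_node, numLeaves_node]; omega

lemma embeds_leaf_of_mem {x : L} {T : RTree L} (h : x ∈ T.leafList) : Embeds (leaf x) T := by
  induction T with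
  | leaf b => simp [leafList] at h; subst h; exact Embeds.leaf x
  | node l r ihl ihr =>
      rcases List.mem_append.mp h with h | h
      · exact Embeds.left (ihl h)
      · exact Embeds.right (ihr h)

lemma isPhylo_node {l r : RTree L} (h : IsPhylo (node l r)) :
    IsPhylo l ∧ IsPhylo r ∧ ∀ x, x ∈ l.leafList → x ∈ r.leafList → False := by
  have := (List.nodup_append).mp h
  exact ⟨this.1, this.2.1, fun x hx hy => this.2.2 x hx x hy rfl⟩

lemma numLeaves_of_balanced {T : RTree L} (h : T.IsBalanced) :
    T.numLeaves = 2 ^ T.height := by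
  induction T with
  | leaf b => simp [numLeaves, leafList, height]
  | node l r ihl ihr =>
      obtain ⟨hl, hr, he⟩ := h
      rw [numLeaves_node, ihl hl, ihr hr, height, he, max_self]
      ring

open Classical in
noncomputable def cnt (P : L → Prop) : RTree L → ℕ
  | leaf x => if P x then 1 else 0
  | node l r => cnt P l + cnt P r

lemma cnt_node (P : L → Prop) (l r : RTree L) : cnt P (node l r) = cnt P l + cnt P r := rfl

lemma cnt_le_numLeaves (P : L → Prop) (T : RTree L) : cnt P T ≤ T.numLeaves := by
  induction T with
  | leaf x =>
      simp only [cnt, numLeaves, leafList, List.length_singleton]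
      split <;> omega
  | node l r ihl ihr => rw [cnt_node, numLeaves_node]; omega

lemma exists_of_cnt_pos {P : L → Prop} {T : RTree L} (h : 0 < cnt P T) :
    ∃ x, x ∈ T.leafList ∧ P x := by
  induction T with
  | leaf x =>
      simp only [cnt] at h
      split at h
      · exact ⟨x, by simp [leafList], ‹_›⟩
      · omega
  | node l r ihl ihr =>
      rw [cnt_node] at h
      rcases Nat.lt_or_ge 0 (cnt P l) with h' | h'
      · obtain ⟨x, hx, hPx⟩ := ihl h'
        exact ⟨x, List.mem_append.mpr (Or.inl hx), hPx⟩
      · obtain ⟨x, hx, hPx⟩ := ihr (by omega)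
        exact ⟨x, List.mem_append.mpr (Or.inr hx), hPx⟩

lemma cnt_eq_numLeaves {P : L → Prop} {T : RTree L} (h : ∀ x ∈ T.leafList, P x) :
    cnt P T = T.numLeaves := by
  induction T with
  | leaf x =>
      simp only [cnt, numLeaves, leafList, List.length_singleton]
      rw [if_pos (h x (by simp [leafList]))]
  | node l r ihl ihr =>
      rw [cnt_node, numLeaves_node,
        ihl (fun x hx => h x (List.mem_append.mpr (Or.inl hx))),
        ihr (fun x hx => h x (List.mem_append.mpr (Or.inr hx)))]

lemma cnt_split {P Q R : L → Prop} {T : RTree L}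
    (h : ∀ x ∈ T.leafList, P x ↔ Q x ∨ R x)
    (hd : ∀ x, Q x → R x → False) :
    cnt P T = cnt Q T + cnt R T := by
  induction T with
  | leaf x =>
      have hx : x ∈ (leaf x : RTree L).leafList := by simp [leafList]
      simp only [cnt]
      by_cases hq : Q x
      · rw [if_pos ((h x hx).mpr (Or.inl hq)), if_pos hq, if_neg (fun hr => hd x hq hr)]
      · by_cases hr : R x
        · rw [if_pos ((h x hx).mpr (Or.inr hr)), if_neg hq, if_pos hr]
        · rw [if_neg (fun hp => ((h x hx).mp hp).elim hq hr), if_neg hq, if_neg hr]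
  | node l r ihl ihr =>
      rw [cnt_node, cnt_node, cnt_node,
        ihl (fun x hx => h x (List.mem_append.mpr (Or.inl hx))),
        ihr (fun x hx => h x (List.mem_append.mpr (Or.inr hx)))]
      omega


lemma descend {P Q : L → Prop} (hPQ : ∀ x, P x → Q x → False) {s : ℝ} (hs : 0 < s) :
    ∀ T : RTree L, s ≤ (cnt P T : ℝ) → 1 ≤ cnt Q T → T.IsPhylo →
    ∃ C D : RTree L,
      (∀ S₁ S₂ : RTree L, Embeds S₁ C → Embeds S₂ D → Embeds (node S₁ S₂) T) ∧
      C.IsPhylo ∧ D.IsPhylo ∧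
      ((s ≤ (cnt P C : ℝ) ∧ 1 ≤ cnt Q D) ∨ (cnt Q T ≤ 2 * cnt Q C ∧ 1 ≤ cnt P D)) := by
  intro T
  induction T with
  | leaf x =>
      intro hP hQ _
      exfalso
      have hp : P x := by
        by_contra hp
        simp only [cnt, if_neg hp] at hP
        norm_num at hP
        linarith
      have hq : Q x := by
        by_contra hq
        simp only [cnt, if_neg hq] at hQ
        omega
      exact hPQ x hp hq
  | node U V ihU ihV =>
      intro hP hQ hphy
      obtain ⟨phU, phV, hdUV⟩ := isPhylo_node hphy
      rw [cnt_node] at hQ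
      by_cases h1 : s ≤ (cnt P U : ℝ)
      · by_cases h2 : 1 ≤ cnt Q V
        · exact ⟨U, V, fun S₁ S₂ e1 e2 => Embeds.pair e1 e2, phU, phV, Or.inl ⟨h1, h2⟩⟩
        · have hQU : 1 ≤ cnt Q U := by omega
          obtain ⟨C, D, comb, pc, pd, hopt⟩ := ihU h1 hQU phU
          refine ⟨C, D, fun S₁ S₂ e1 e2 => Embeds.left (comb S₁ S₂ e1 e2), pc, pd, ?_⟩
          rcases hopt with h | h
          · exact Or.inl h
          · exact Or.inr ⟨by rw [cnt_node]; omega, h.2⟩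
      · by_cases h1' : s ≤ (cnt P V : ℝ)
        · by_cases h2 : 1 ≤ cnt Q U
          · exact ⟨V, U, fun S₁ S₂ e1 e2 => Embeds.pair_swap e1 e2, phV, phU, Or.inl ⟨h1', h2⟩⟩
          · have hQV : 1 ≤ cnt Q V := by omega
            obtain ⟨C, D, comb, pc, pd, hopt⟩ := ihV h1' hQV phV
            refine ⟨C, D, fun S₁ S₂ e1 e2 => Embeds.right (comb S₁ S₂ e1 e2), pc, pd, ?_⟩
            rcases hopt with h | h
            · exact Or.inl h
            · exact Or.inr ⟨by rw [cnt_node]; omega, h.2⟩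
        · -- both children have P-count < s
          push_neg at h1 h1'
          have hsum : s ≤ ((cnt P U : ℕ) : ℝ) + (cnt P V : ℝ) := by
            rw [cnt_node] at hP
            push_cast at hP
            linarith
          have hPU1 : 1 ≤ cnt P U := by
            by_contra h
            have : cnt P U = 0 := by omega
            rw [this] at hsum
            simp at hsum
            linarith
          have hPV1 : 1 ≤ cnt P V := by
            by_contra h
            have : cnt P V = 0 := by omega
            rw [this] at hsum
            simp at hsum
            linarith
          by_cases hq : cnt Q V ≤ cnt Q U
          · exact ⟨U, V, fun S₁ S₂ e1 e2 => Embeds.pair e1 e2, phU, phV,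
              Or.inr ⟨by rw [cnt_node]; omega, hPV1⟩⟩
          · exact ⟨V, U, fun S₁ S₂ e1 e2 => Embeds.pair_swap e1 e2, phV, phU,
              Or.inr ⟨by rw [cnt_node]; omega, hPU1⟩⟩



lemma num_d_pos {δ : ℝ} (hδ0 : 0 < δ) (hδ2 : δ < 1/2) : 0 < 1 - Real.logb 2 δ := by
  have h := Real.logb_neg one_lt_two hδ0 (by linarith)
  linarith

lemma num1 (δ t a m1 N : ℝ) (hδ0 : 0 < δ) (hδ2 : δ < 1/2) (ht : 1 ≤ t)
    (ha : (1 - δ) * t ≤ a)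
    (hN : (m1 * Real.logb 2 (1 - δ) + Real.logb 2 a) / (1 - Real.logb 2 δ) ≤ N) :
    ((m1 + 1) * Real.logb 2 (1 - δ) + Real.logb 2 t) / (1 - Real.logb 2 δ) ≤ N := by
  have hd := num_d_pos hδ0 hδ2
  have hpos : (0:ℝ) < (1 - δ) * t := by nlinarith
  have h1 : Real.logb 2 ((1 - δ) * t) ≤ Real.logb 2 a :=
    Real.logb_le_logb_of_le one_lt_two hpos ha
  have h2 : Real.logb 2 ((1 - δ) * t) = Real.logb 2 (1 - δ) + Real.logb 2 t :=
    Real.logb_mul (by nlinarith) (by nlinarith)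
  have e : (m1 + 1) * Real.logb 2 (1 - δ)
      = m1 * Real.logb 2 (1 - δ) + Real.logb 2 (1 - δ) := by ring
  rw [div_le_iff₀ hd] at hN ⊢
  linarith

lemma num2 (δ t k m1 N : ℝ) (hδ0 : 0 < δ) (hδ2 : δ < 1/2) (ht : 1 ≤ t)
    (hk : δ * (1 - δ) * t / 2 ≤ k)
    (hN : (m1 * Real.logb 2 (1 - δ) + Real.logb 2 k) / (1 - Real.logb 2 δ) ≤ N) :
    ((m1 + 1) * Real.logb 2 (1 - δ) + Real.logb 2 t) / (1 - Real.logb 2 δ) ≤ N + 1 := by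
  have hd := num_d_pos hδ0 hδ2
  have h1δ : (0:ℝ) < 1 - δ := by linarith
  have ht0 : (0:ℝ) < t := by linarith
  have hs : (0:ℝ) < δ * (1 - δ) * t / 2 := by positivity
  have hlogk : Real.logb 2 (δ * (1 - δ) * t / 2) ≤ Real.logb 2 k :=
    Real.logb_le_logb_of_le one_lt_two hs hk
  have hlogs : Real.logb 2 (δ * (1 - δ) * t / 2)
      = Real.logb 2 δ + Real.logb 2 (1 - δ) + Real.logb 2 t - 1 := by
    rw [Real.logb_div (by nlinarith) (by norm_num), Real.logb_mul (by nlinarith) (by nlinarith),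
      Real.logb_mul (by nlinarith) (by nlinarith), Real.logb_self_eq_one one_lt_two]
  have e : (m1 + 1) * Real.logb 2 (1 - δ)
      = m1 * Real.logb 2 (1 - δ) + Real.logb 2 (1 - δ) := by ring
  have e2 : (N + 1) * (1 - Real.logb 2 δ) = N * (1 - Real.logb 2 δ) + (1 - Real.logb 2 δ) := by
    ring
  rw [div_le_iff₀ hd] at hN ⊢
  linarith


lemma cnt_congr {P Q : L → Prop} {T : RTree L} (h : ∀ x ∈ T.leafList, P x ↔ Q x) :
    cnt P T = cnt Q T := by
  induction T with
  | leaf x =>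
      have hx := h x (by simp [leafList])
      simp only [cnt]
      by_cases hp : P x
      · rw [if_pos hp, if_pos (hx.mp hp)]
      · rw [if_neg hp, if_neg (fun hq => hp (hx.mpr hq))]
  | node l r ihl ihr =>
      rw [cnt_node, cnt_node,
        ihl (fun x hx => h x (List.mem_append.mpr (Or.inl hx))),
        ihr (fun x hx => h x (List.mem_append.mpr (Or.inr hx)))]

lemma cnt_eq_le_one {y : L} {T : RTree L} (h : T.leafList.Nodup) :
    cnt (fun x => x = y) T ≤ 1 := by
  induction T with
  | leaf x => simp only [cnt]; split <;> omega
  | node l r ihl ihr =>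
      rw [leafList_node, List.nodup_append] at h
      rw [cnt_node]
      rcases Nat.eq_zero_or_pos (cnt (fun x => x = y) l) with h0 | hpos
      · rw [h0]; simpa using ihr h.2.1
      · obtain ⟨x, hx, rfl⟩ := exists_of_cnt_pos hpos
        have hr0 : cnt (fun z => z = x) r = 0 := by
          by_contra hr
          obtain ⟨z, hz, rfl⟩ := exists_of_cnt_pos (Nat.pos_of_ne_zero hr)
          exact h.2.2 _ hx _ hz rfl
        have := ihl h.1
        omega

lemma nat_one_le_of_real_pos {n : ℕ} (h : (0:ℝ) < (n:ℝ)) : 1 ≤ n := by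
  have : 0 < n := by exact_mod_cast h
  omega

lemma main_lemma (δ : ℝ) (hδ0 : 0 < δ) (hδ2 : δ < 1/2) :
    ∀ T1 T2 : RTree L, T1.IsPhylo → T2.IsPhylo → T1.IsBalanced →
      1 ≤ cnt (fun x => x ∈ T1.leafList) T2 →
      ∃ S : RTree L, S.IsPhylo ∧ Embeds S T1 ∧ Embeds S T2 ∧
        ((T1.height : ℝ) * Real.logb 2 (1 - δ)
            + Real.logb 2 (cnt (fun x => x ∈ T1.leafList) T2 : ℝ))
          / (1 - Real.logb 2 δ) ≤ (S.numLeaves : ℝ) := by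
  intro T1
  induction T1 with
  | leaf y =>
      intro T2 _ h2 _ hcnt
      obtain ⟨x, hxT2, hxT1⟩ :=
        exists_of_cnt_pos (show 0 < cnt (fun x => x ∈ (leaf y : RTree L).leafList) T2 by omega)
      have hre : cnt (fun x => x ∈ (leaf y : RTree L).leafList) T2
          = cnt (fun x => x = y) T2 :=
        cnt_congr (fun x _ => by simp [leafList])
      have ht1 : cnt (fun x => x ∈ (leaf y : RTree L).leafList) T2 = 1 := by
        refine le_antisymm ?_ hcnt
        rw [hre]
        exact cnt_eq_le_one h2
      refine ⟨leaf x, by simp [IsPhylo, leafList], embeds_leaf_of_mem hxT1,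
        embeds_leaf_of_mem hxT2, ?_⟩
      rw [ht1]
      have hd := num_d_pos hδ0 hδ2
      simp only [height, numLeaves, leafList, List.length_singleton, Nat.cast_one,
        Real.logb_one, Nat.cast_zero, zero_mul, add_zero, zero_div]
      norm_num
  | node A B ihA ihB =>
      intro T2 h1 h2 hbal hcnt
      obtain ⟨balA, balB, hABh⟩ := hbal
      obtain ⟨phA, phB, hdAB⟩ := isPhylo_node h1
      have habt : cnt (fun x => x ∈ (node A B).leafList) T2
          = cnt (fun x => x ∈ A.leafList) T2 + cnt (fun x => x ∈ B.leafList) T2 :=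
        cnt_split (fun x _ => by simp [leafList_node]) hdAB
      have hhA : (node A B).height = A.height + 1 := by simp [height, hABh]
      have hhB : (node A B).height = B.height + 1 := by simp [height, hABh]
      have hd := num_d_pos hδ0 hδ2
      set a := cnt (fun x => x ∈ A.leafList) T2 with ha_def
      set b := cnt (fun x => x ∈ B.leafList) T2 with hb_def
      have ht1 : 1 ≤ a + b := by rw [← habt]; exact hcnt
      have htR : (1:ℝ) ≤ (a:ℝ) + (b:ℝ) := by exact_mod_cast ht1
      have h1δ : (0:ℝ) < 1 - δ := by linarith
      have htpos : (0:ℝ) < (a:ℝ) + (b:ℝ) := by linarith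
      by_cases hca : (1 - δ) * ((a:ℝ) + (b:ℝ)) ≤ (a:ℝ)
      · -- recurse into A
        have ha1 : 1 ≤ a :=
          nat_one_le_of_real_pos (lt_of_lt_of_le (mul_pos h1δ htpos) hca)
        obtain ⟨S, pS, eA, eT2, hbound⟩ := ihA T2 phA h2 balA ha1
        refine ⟨S, pS, Embeds.left eA, eT2, ?_⟩
        rw [habt, hhA]
        push_cast
        exact num1 δ ((a:ℝ) + (b:ℝ)) (a:ℝ) (A.height : ℝ) (S.numLeaves : ℝ)
          hδ0 hδ2 htR hca hbound
      · by_cases hcb : (1 - δ) * ((a:ℝ) + (b:ℝ)) ≤ (b:ℝ)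
        · -- recurse into B
          have hb1 : 1 ≤ b :=
            nat_one_le_of_real_pos (lt_of_lt_of_le (mul_pos h1δ htpos) hcb)
          obtain ⟨S, pS, eB, eT2, hbound⟩ := ihB T2 phB h2 balB hb1
          refine ⟨S, pS, Embeds.right eB, eT2, ?_⟩
          rw [habt, hhB]
          push_cast
          have habc : (a:ℝ) + (b:ℝ) = (b:ℝ) + (a:ℝ) := by ring
          rw [habc]
          exact num1 δ ((b:ℝ) + (a:ℝ)) (b:ℝ) (B.height : ℝ) (S.numLeaves : ℝ)
            hδ0 hδ2 (by linarith) (by linarith) hbound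
        · -- balanced case: use the descent lemma
          push_neg at hca hcb
          have hta : δ * ((a:ℝ) + (b:ℝ)) < (a:ℝ) := by nlinarith
          have htb : δ * ((a:ℝ) + (b:ℝ)) < (b:ℝ) := by nlinarith
          have hs : (0:ℝ) < δ * (1 - δ) * ((a:ℝ) + (b:ℝ)) / 2 := by positivity
          have hsa : δ * (1 - δ) * ((a:ℝ) + (b:ℝ)) / 2 ≤ ((a:ℝ)) := by nlinarith
          have hQ1 : 1 ≤ b :=
            nat_one_le_of_real_pos (lt_trans (mul_pos hδ0 htpos) htb)
          obtain ⟨C, D, comb, pc, pd, hopt⟩ :=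
            descend (P := fun x => x ∈ A.leafList) (Q := fun x => x ∈ B.leafList)
              hdAB hs T2 (by rw [← ha_def]; exact hsa) (by rw [← hb_def]; exact hQ1) h2
          rcases hopt with ⟨hC, hD⟩ | ⟨hC, hD⟩
          · -- big A-count in C, a B-leaf in D
            have hk1 : 1 ≤ cnt (fun x => x ∈ A.leafList) C :=
              nat_one_le_of_real_pos (lt_of_lt_of_le hs hC)
            obtain ⟨S₁, p1, eA, eC, hb1⟩ := ihA C phA pc balA hk1
            obtain ⟨x, hxD, hxB⟩ := exists_of_cnt_pos (show 0 < cnt (fun x => x ∈ B.leafList) D by omega)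
            refine ⟨node S₁ (leaf x), ?_, Embeds.pair eA (embeds_leaf_of_mem hxB),
              comb _ _ eC (embeds_leaf_of_mem hxD), ?_⟩
            · rw [IsPhylo, leafList_node, List.nodup_append]
              refine ⟨p1, by simp [leafList], ?_⟩
              intro y hy z hy' hyz
              simp only [leafList, List.mem_singleton] at hy'
              subst z; subst x
              exact hdAB y (embeds_leafList_subset eA hy) hxB
            · rw [habt, hhA, numLeaves_node]
              have hnl : (leaf x : RTree L).numLeaves = 1 := by simp [numLeaves, leafList]
              rw [hnl]
              push_cast
              exact num2 δ ((a:ℝ) + (b:ℝ)) ((cnt (fun x => x ∈ A.leafList) C : ℕ) : ℝ)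
                (A.height : ℝ) (S₁.numLeaves : ℝ) hδ0 hδ2 htR hC hb1
          · -- big B-count in C, an A-leaf in D
            have hk2 : 1 ≤ cnt (fun x => x ∈ B.leafList) C := by
              rw [← hb_def] at hC; omega
            obtain ⟨S₁, p1, eB, eC, hb1⟩ := ihB C phB pc balB hk2
            obtain ⟨x, hxD, hxA⟩ := exists_of_cnt_pos (show 0 < cnt (fun x => x ∈ A.leafList) D by omega)
            refine ⟨node S₁ (leaf x), ?_, Embeds.pair_swap eB (embeds_leaf_of_mem hxA),
              comb _ _ eC (embeds_leaf_of_mem hxD), ?_⟩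
            · rw [IsPhylo, leafList_node, List.nodup_append]
              refine ⟨p1, by simp [leafList], ?_⟩
              intro y hy z hy' hyz
              simp only [leafList, List.mem_singleton] at hy'
              subst z; subst x
              exact hdAB y hxA (embeds_leafList_subset eB hy)
            · rw [habt, hhB, numLeaves_node]
              have hnl : (leaf x : RTree L).numLeaves = 1 := by simp [numLeaves, leafList]
              rw [hnl]
              push_cast
              have hCR : (b:ℝ) ≤ 2 * (cnt (fun x => x ∈ B.leafList) C : ℝ) := by
                rw [← hb_def] at hC
                exact_mod_cast hC
              refine num2 δ ((a:ℝ) + (b:ℝ)) ((cnt (fun x => x ∈ B.leafList) C : ℕ) : ℝ)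
                (B.height : ℝ) (S₁.numLeaves : ℝ) hδ0 hδ2 htR (by nlinarith) hb1

end RTree


/-- If `T₁` is a rooted balanced binary phylogenetic tree on `2^m`
leaves and `T₂` is an arbitrary rooted binary phylogenetic tree on `t > 0` leaves with
`L(T₂) ⊆ L(T₁)`, then for every `δ ∈ (0, 1/2)`,
`mast{T₁,T₂} ≥ (m·log(1-δ) + log t) / (1 - log δ)` (logarithms base 2). -/
theorem stmt_1 {L : Type} (m : ℕ) (T₁ T₂ : RTree L) (δ : ℝ)
    (h₁ : T₁.IsPhylo) (h₂ : T₂.IsPhylo)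
    (hbal : T₁.IsBalanced) (hcard : T₁.numLeaves = 2 ^ m)
    (ht : 0 < T₂.numLeaves) (hsub : T₂.leafSet ⊆ T₁.leafSet)
    (hδ : δ ∈ Set.Ioo (0 : ℝ) (1/2)) :
    ((m : ℝ) * Real.logb 2 (1 - δ) + Real.logb 2 (T₂.numLeaves : ℝ)) / (1 - Real.logb 2 δ)
      ≤ (RTree.mast T₁ T₂ : ℝ) := by
  obtain ⟨hδ0, hδ2⟩ := hδ
  have hcnt_eq : RTree.cnt (fun x => x ∈ T₁.leafList) T₂ = T₂.numLeaves :=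
    RTree.cnt_eq_numLeaves (fun x hx => hsub hx)
  have hh : T₁.height = m := by
    have h := RTree.numLeaves_of_balanced hbal
    rw [hcard] at h
    exact Nat.pow_right_injective (le_refl 2) h.symm
  have hcnt1 : 1 ≤ RTree.cnt (fun x => x ∈ T₁.leafList) T₂ := by rw [hcnt_eq]; omega
  obtain ⟨S, pS, e1, e2, hb⟩ := RTree.main_lemma δ hδ0 hδ2 T₁ T₂ h₁ h₂ hbal hcnt1
  have hmast : S.numLeaves ≤ RTree.mast T₁ T₂ := by
    apply le_csSup
    · refine ⟨T₁.numLeaves, ?_⟩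
      rintro n ⟨S', _, e1', _, rfl⟩
      exact RTree.numLeaves_le_of_embeds e1'
    · exact ⟨S, pS, e1, e2, rfl⟩
  rw [hcnt_eq, hh] at hb
  exact le_trans hb (by exact_mod_cast hmast)
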